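/- Let (Ω, μ) be a probability space, let Θ : Ω → ℝⁿ have square-integrable components, let d : Ω → {0,1} satisfy μ({d = 1}) = p, and let ω : Ω → ℝ be square-integrable with E[ω] = 0 and E[ω²] = σ², where Θ, d and ω are mutually independent. Let Ā₀, Ā₁ be real n×n matrices and B̄ ∈ ℝⁿ, and define Θ′ : Ω → ℝⁿ by Θ′ = Ā₁Θ + B̄ω on {d = 1} and Θ′ = Ā₀Θ + B̄ω on {d = 0}. Then the second-moment matrix satisfies E[Θ′Θ′ᵀ] = 𝓐 E[ΘΘᵀ] 𝓐ᵀ + p(1−p) Ã E[ΘΘᵀ] Ãᵀ + σ² B̄B̄ᵀ, where 𝓐 = pĀ₁ + (1−p)Ā₀ and Ã = Ā₁ − Ā₀. -/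

import Mathlib

open MeasureTheory ProbabilityTheory Matrix

private lemma l2_mul_int {Ω : Type*} [MeasurableSpace Ω] {μ : Measure Ω}
    {f g : Ω → ℝ} (hf : MemLp f 2 μ) (hg : MemLp g 2 μ) :
    Integrable (fun a => f a * g a) μ := by
  have h : MemLp (f • g) 1 μ := hg.smul hf (hpqr := ⟨by simp [one_div, ENNReal.inv_two_add_inv_two]⟩)
  rw [memLp_one_iff_integrable] at h
  exact h

/-- One-step second-moment recursion for the jump-linear system
`Θ′ = Ā(d)Θ + B̄ω` with a Bernoulli(p) dropout `d` and zero-mean noise `ω`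
of variance `σ²`, where `Θ`, `d`, `ω` are mutually independent:
`E[Θ′Θ′ᵀ] = 𝓐 E[ΘΘᵀ] 𝓐ᵀ + p(1−p) Ã E[ΘΘᵀ] Ãᵀ + σ² B̄B̄ᵀ` with
`𝓐 = pĀ₁ + (1−p)Ā₀` and `Ã = Ā₁ − Ā₀`. -/
theorem second_moment_recursion {Ω : Type*} [MeasurableSpace Ω]
    (μ : Measure Ω) [IsProbabilityMeasure μ]
    {n : ℕ} (Θ : Ω → Fin n → ℝ) (d : Ω → Bool) (ω : Ω → ℝ) (p σ2 : ℝ)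
    (A0 A1 : Matrix (Fin n) (Fin n) ℝ) (B : Fin n → ℝ)
    (hΘmeas : Measurable Θ) (hdmeas : Measurable d) (hωmeas : Measurable ω)
    (hΘL2 : ∀ i, MemLp (fun a => Θ a i) 2 μ)
    (hωL2 : MemLp ω 2 μ)
    (hd : (μ {a | d a = true}).toReal = p)
    (hωmean : ∫ a, ω a ∂μ = 0)
    (hωvar : ∫ a, (ω a) ^ 2 ∂μ = σ2)
    (hΘd : IndepFun Θ d μ)
    (hΘdω : IndepFun (fun a => (Θ a, d a)) ω μ)
    (Θ' : Ω → Fin n → ℝ)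
    (hΘ' : ∀ a, Θ' a = (if d a then A1 else A0).mulVec (Θ a) + ω a • B) :
    (Matrix.of fun i j => ∫ a, Θ' a i * Θ' a j ∂μ) =
      (p • A1 + (1 - p) • A0) * (Matrix.of fun i j => ∫ a, Θ a i * Θ a j ∂μ) *
          (p • A1 + (1 - p) • A0)ᵀ +
        (p * (1 - p)) • ((A1 - A0) *
          (Matrix.of fun i j => ∫ a, Θ a i * Θ a j ∂μ) * (A1 - A0)ᵀ) +
        σ2 • vecMulVec B B := by
  -- basic measurability and integrability
  have hΘk : ∀ k, Measurable fun a => Θ a k := fun k => (measurable_pi_apply k).comp hΘmeas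
  have hSint : ∀ k l, Integrable (fun a => Θ a k * Θ a l) μ :=
    fun k l => l2_mul_int (hΘL2 k) (hΘL2 l)
  have hΘω : ∀ k, Integrable (fun a => Θ a k * ω a) μ := fun k => l2_mul_int (hΘL2 k) hωL2
  have hωω : Integrable (fun a => ω a * ω a) μ := l2_mul_int hωL2 hωL2
  have hst : MeasurableSet {a | d a = true} := hdmeas (measurableSet_singleton true)
  have hsf : MeasurableSet {a | d a = false} := hdmeas (measurableSet_singleton false)
  -- bounded multiplier preserves integrability
  have hbd : ∀ (c1 c0 : ℝ) (h : Ω → ℝ), Integrable h μ →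
      Integrable (fun a => (if d a then c1 else c0) * h a) μ := by
    intro c1 c0 h hh
    refine hh.bdd_mul (c := max ‖c1‖ ‖c0‖) ?_ ?_
    · exact ((measurable_of_countable (fun b : Bool => if b then c1 else c0)).comp
        hdmeas).aestronglyMeasurable
    · exact Filter.Eventually.of_forall fun a => by cases hda : d a <;>
        simp [hda, le_max_left, le_max_right]
  -- value of Bernoulli integrals
  have hq : (μ {a | d a = false}).toReal = 1 - p := by
    have hc : {a | d a = false} = {a | d a = true}ᶜ := by ext a; cases h : d a <;> simp [h]
    rw [hc, measure_compl hst (measure_ne_top μ _), measure_univ,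
      ENNReal.toReal_sub_of_le prob_le_one ENNReal.one_ne_top, ENNReal.toReal_one, hd]
  have hite : ∀ c1 c0 : ℝ, ∫ a, (if d a then c1 else c0) ∂μ = p * c1 + (1 - p) * c0 := by
    intro c1 c0
    have he : (fun a => if d a then c1 else c0)
        = fun a => {a | d a = true}.indicator (fun _ => c1) a
            + {a | d a = false}.indicator (fun _ => c0) a := by
      funext a; cases h : d a <;> simp [Set.indicator_apply, h]
    rw [he, integral_add ((integrable_const c1).indicator hst)
      ((integrable_const c0).indicator hsf), integral_indicator_const _ hst,
      integral_indicator_const _ hsf, measureReal_def, measureReal_def, hd, hq, smul_eq_mul, smul_eq_mul]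
  -- independence factorization for the quadratic part
  have hfact : ∀ (k l : Fin n) (c1 c0 : ℝ),
      ∫ a, (if d a then c1 else c0) * (Θ a k * Θ a l) ∂μ
        = (p * c1 + (1 - p) * c0) * ∫ a, Θ a k * Θ a l ∂μ := by
    intro k l c1 c0
    have hind : IndepFun ((fun b : Bool => if b then c1 else c0) ∘ d)
        ((fun v : Fin n → ℝ => v k * v l) ∘ Θ) μ :=
      hΘd.symm.comp (measurable_of_countable fun b : Bool => if b then c1 else c0)
        ((measurable_pi_apply k).mul (measurable_pi_apply l))
    have hm1 : AEStronglyMeasurable ((fun b : Bool => if b then c1 else c0) ∘ d) μ :=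
      ((measurable_of_countable (fun b : Bool => if b then c1 else c0)).comp
        hdmeas).aestronglyMeasurable
    have hm2 : AEStronglyMeasurable ((fun v : Fin n → ℝ => v k * v l) ∘ Θ) μ :=
      ((hΘk k).mul (hΘk l)).aestronglyMeasurable
    have h2 : ∫ a, (if d a then c1 else c0) * (Θ a k * Θ a l) ∂μ
        = (∫ a, (if d a then c1 else c0) ∂μ) * ∫ a, Θ a k * Θ a l ∂μ :=
      hind.integral_fun_mul_eq_mul_integral hm1 hm2
    rw [h2, hite]
  -- cross terms vanish
  have hcross : ∀ (g : (Fin n → ℝ) × Bool → ℝ), Measurable g →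
      ∫ a, g (Θ a, d a) * ω a ∂μ = 0 := by
    intro g hg
    have hind : IndepFun (fun a => g (Θ a, d a)) ω μ := hΘdω.comp hg measurable_id
    have h2 := hind.integral_fun_mul_eq_mul_integral (hg.comp (hΘmeas.prodMk hdmeas)).aestronglyMeasurable
      hωmeas.aestronglyMeasurable
    rw [hωmean, mul_zero] at h2
    exact h2
  have hcross1 : ∀ (k : Fin n) (c1 c0 : ℝ),
      ∫ a, (if d a then c1 else c0) * (Θ a k * ω a) ∂μ = 0 := by
    intro k c1 c0
    have hg : Measurable (fun q : (Fin n → ℝ) × Bool => (if q.2 then c1 else c0) * q.1 k) :=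
      ((measurable_of_countable (fun b : Bool => if b then c1 else c0)).comp
        measurable_snd).mul ((measurable_pi_apply k).comp measurable_fst)
    calc ∫ a, (if d a then c1 else c0) * (Θ a k * ω a) ∂μ
        = ∫ a, ((if d a then c1 else c0) * Θ a k) * ω a ∂μ :=
          integral_congr_ae (Filter.Eventually.of_forall fun a => by ring)
      _ = 0 := hcross _ hg
  have hωωσ : ∫ a, ω a * ω a ∂μ = σ2 := by
    rw [← hωvar]; exact integral_congr_ae (Filter.Eventually.of_forall fun a => by ring)
  ext i j
  -- pointwise expansion
  have key : ∀ (M : Matrix (Fin n) (Fin n) ℝ) (θ : Fin n → ℝ) (w : ℝ),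
      (M.mulVec θ i + w * B i) * (M.mulVec θ j + w * B j) =
        (∑ k, ∑ l, (M i k * M j l) * (θ k * θ l)) +
          ((∑ k, M i k * (θ k * w)) * B j + (∑ l, M j l * (θ l * w)) * B i
            + (w * w) * (B i * B j)) := by
    intro M θ w
    have e1 : (∑ k, M i k * θ k) * (∑ l, M j l * θ l)
        = ∑ k, ∑ l, (M i k * M j l) * (θ k * θ l) := by
      rw [Finset.sum_mul_sum]
      exact Finset.sum_congr rfl fun k _ => Finset.sum_congr rfl fun l _ => by ring
    have e2 : (∑ k, M i k * θ k) * (w * B j) = (∑ k, M i k * (θ k * w)) * B j := by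
      rw [Finset.sum_mul, Finset.sum_mul]
      exact Finset.sum_congr rfl fun k _ => by ring
    have e3 : (w * B i) * (∑ l, M j l * θ l) = (∑ l, M j l * (θ l * w)) * B i := by
      rw [Finset.mul_sum, Finset.sum_mul]
      exact Finset.sum_congr rfl fun l _ => by ring
    simp only [mulVec, dotProduct]
    rw [add_mul, mul_add, mul_add, e1, e2, e3]
    ring
  have hpt : ∀ a, Θ' a i * Θ' a j =
      (∑ k, ∑ l, (if d a then A1 i k * A1 j l else A0 i k * A0 j l) * (Θ a k * Θ a l)) +
        ((∑ k, (if d a then A1 i k else A0 i k) * (Θ a k * ω a)) * B j +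
          (∑ l, (if d a then A1 j l else A0 j l) * (Θ a l * ω a)) * B i +
          (ω a * ω a) * (B i * B j)) := by
    intro a
    rw [hΘ' a]
    cases h : d a <;>
      simpa [h, Pi.add_apply, Pi.smul_apply, smul_eq_mul, mul_comm] using
        key _ (Θ a) (ω a)
  -- integrability of the pieces
  have hI1 : Integrable (fun a => ∑ k, ∑ l,
      (if d a then A1 i k * A1 j l else A0 i k * A0 j l) * (Θ a k * Θ a l)) μ :=
    integrable_finset_sum _ fun k _ => integrable_finset_sum _ fun l _ =>
      hbd _ _ _ (hSint k l)
  have hI2 : Integrable (fun a =>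
      (∑ k, (if d a then A1 i k else A0 i k) * (Θ a k * ω a)) * B j) μ :=
    (integrable_finset_sum _ fun k _ => hbd _ _ _ (hΘω k)).mul_const _
  have hI3 : Integrable (fun a =>
      (∑ l, (if d a then A1 j l else A0 j l) * (Θ a l * ω a)) * B i) μ :=
    (integrable_finset_sum _ fun l _ => hbd _ _ _ (hΘω l)).mul_const _
  have hI4 : Integrable (fun a => (ω a * ω a) * (B i * B j)) μ := hωω.mul_const _
  -- compute the integral
  have hLHS : ∫ a, Θ' a i * Θ' a j ∂μ =
      (∑ k, ∑ l, (p * (A1 i k * A1 j l) + (1 - p) * (A0 i k * A0 j l)) *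
        ∫ a, Θ a k * Θ a l ∂μ) + σ2 * (B i * B j) := by
    have hI23 : Integrable (fun a =>
        (∑ k, (if d a then A1 i k else A0 i k) * (Θ a k * ω a)) * B j +
          (∑ l, (if d a then A1 j l else A0 j l) * (Θ a l * ω a)) * B i) μ := hI2.add hI3
    have hI234 : Integrable (fun a =>
        (∑ k, (if d a then A1 i k else A0 i k) * (Θ a k * ω a)) * B j +
          (∑ l, (if d a then A1 j l else A0 j l) * (Θ a l * ω a)) * B i +
          (ω a * ω a) * (B i * B j)) μ := hI23.add hI4
    simp only [hpt]
    rw [integral_add hI1 hI234, integral_add hI23 hI4, integral_add hI2 hI3]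
    have v1 : ∫ a, (∑ k, ∑ l,
        (if d a then A1 i k * A1 j l else A0 i k * A0 j l) * (Θ a k * Θ a l)) ∂μ
        = ∑ k, ∑ l, (p * (A1 i k * A1 j l) + (1 - p) * (A0 i k * A0 j l)) *
            ∫ a, Θ a k * Θ a l ∂μ := by
      rw [integral_finset_sum _ fun k _ => integrable_finset_sum _ fun l _ =>
        hbd _ _ _ (hSint k l)]
      refine Finset.sum_congr rfl fun k _ => ?_
      rw [integral_finset_sum _ fun l _ => hbd _ _ _ (hSint k l)]
      exact Finset.sum_congr rfl fun l _ => hfact k l _ _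
    have v2 : ∫ a, (∑ k, (if d a then A1 i k else A0 i k) * (Θ a k * ω a)) * B j ∂μ = 0 := by
      rw [integral_mul_const, integral_finset_sum _ fun k _ => hbd _ _ _ (hΘω k),
        Finset.sum_eq_zero fun k _ => hcross1 k _ _, zero_mul]
    have v3 : ∫ a, (∑ l, (if d a then A1 j l else A0 j l) * (Θ a l * ω a)) * B i ∂μ = 0 := by
      rw [integral_mul_const, integral_finset_sum _ fun l _ => hbd _ _ _ (hΘω l),
        Finset.sum_eq_zero fun l _ => hcross1 l _ _, zero_mul]
    have v4 : ∫ a, (ω a * ω a) * (B i * B j) ∂μ = σ2 * (B i * B j) := by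
      rw [integral_mul_const, hωωσ]
    rw [v1, v2, v3, v4]
    ring
  show ∫ a, Θ' a i * Θ' a j ∂μ = _
  rw [hLHS]
  simp only [Matrix.add_apply, Matrix.mul_apply, Matrix.smul_apply, Matrix.transpose_apply,
    Matrix.sub_apply, Matrix.of_apply, vecMulVec_apply, smul_eq_mul]
  have hsum : (∑ k, ∑ l, (p * (A1 i k * A1 j l) + (1 - p) * (A0 i k * A0 j l)) *
      ∫ a, Θ a k * Θ a l ∂μ)
      = (∑ l, (∑ k, (p * A1 i k + (1 - p) * A0 i k) * ∫ a, Θ a k * Θ a l ∂μ) *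
          (p * A1 j l + (1 - p) * A0 j l))
        + p * (1 - p) * ∑ l, (∑ k, (A1 i k - A0 i k) * ∫ a, Θ a k * Θ a l ∂μ) *
          (A1 j l - A0 j l) := by
    rw [Finset.sum_comm, Finset.mul_sum, ← Finset.sum_add_distrib]
    refine Finset.sum_congr rfl fun l _ => ?_
    rw [Finset.sum_mul, Finset.sum_mul, Finset.mul_sum, ← Finset.sum_add_distrib]
    exact Finset.sum_congr rfl fun k _ => by ring
  rw [hsum]
  try ring
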